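/- Fix integers M ≥ 2 and n ≥ 1, and a radius a > 0. Let S(M) be the set of convex polynomials g : ℝⁿ → ℝ of the form g(v) = Σ_{α ∈ Γ(M)} c_α v^α, where Γ(M) = {α ∈ ℕⁿ : 2 ≤ |α| ≤ M} (so g has no constant or linear terms). Then there exists a constant C(M, a) > 0 depending only on M, n, and a such that for every g ∈ S(M), Σ_{α ∈ Γ(M)} |c_α| ≤ C(M, a) · ∫_{|σ|=a} g(σ) dσ. -/

import Mathlib

open MeasureTheory Metric Set
open scoped NNReal ENNReal


lemma normsq (k : ℕ) (x : EuclideanSpace ℝ (Fin k)) : ‖x‖^2 = ∑ i, (x i)^2 := by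
  rw [EuclideanSpace.norm_eq, Real.sq_sqrt (by positivity)]
  simp [Real.norm_eq_abs, sq_abs]

lemma haus_pi_fin (m : ℕ) : (μH[(m:ℝ)] : Measure (Fin m → ℝ)) = volume := by
  simpa using (hausdorffMeasure_pi_real (ι := Fin m))

lemma euc_haus_closedBall_lt_top (m : ℕ) (x : EuclideanSpace ℝ (Fin m)) (r : ℝ) :
    μH[(m:ℝ)] (closedBall x r) < ⊤ := by
  have h := (PiLp.antilipschitzWith_ofLp 2 (fun _ : Fin m => ℝ)).le_hausdorffMeasure_image
    (d := (m:ℝ)) (Nat.cast_nonneg m) (closedBall x r)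
  rw [haus_pi_fin] at h
  refine lt_of_le_of_lt h (ENNReal.mul_lt_top ?_ ?_)
  · exact ENNReal.rpow_lt_top_of_nonneg (Nat.cast_nonneg m) (by simp)
  · have hsub : (WithLp.equiv 2 (Fin m → ℝ)) '' (closedBall x r)
        ⊆ closedBall ((WithLp.equiv 2 (Fin m → ℝ)) x) r := by
      rintro _ ⟨y, hy, rfl⟩
      exact mem_closedBall.2 <| le_trans
        (by simpa using (PiLp.lipschitzWith_ofLp 2 (fun _ : Fin m => ℝ)).dist_le_mul y x)
        (mem_closedBall.1 hy)
    exact lt_of_le_of_lt (measure_mono hsub) (isCompact_closedBall _ _).measure_lt_top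

lemma euc_haus_ball_pos (m : ℕ) (x : EuclideanSpace ℝ (Fin m)) {r : ℝ} (hr : 0 < r) :
    0 < μH[(m:ℝ)] (ball x r) := by
  have h := (PiLp.lipschitzWith_ofLp 2 (fun _ : Fin m => ℝ)).hausdorffMeasure_image_le
    (d := (m:ℝ)) (Nat.cast_nonneg m) (ball x r)
  rw [haus_pi_fin] at h
  simp only [ENNReal.coe_one, ENNReal.one_rpow, one_mul] at h
  refine lt_of_lt_of_le ?_ h
  have heq : WithLp.ofLp '' (ball x r)
      = (WithLp.equiv 2 (Fin m → ℝ)).symm ⁻¹' (ball x r) :=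
    (Equiv.image_eq_preimage_symm (WithLp.equiv 2 (Fin m → ℝ)) _)
  rw [heq]
  refine (IsOpen.measure_pos volume ?_ ?_)
  · exact IsOpen.preimage (PiLp.continuous_toLp 2 (fun _ : Fin m => ℝ)) isOpen_ball
  · refine ⟨(WithLp.equiv 2 (Fin m → ℝ)) x, ?_⟩
    simp only [Set.mem_preimage, Equiv.symm_apply_apply]
    exact mem_ball_self hr


noncomputable def chart (m : ℕ) (a ε : ℝ) (i : Fin (m+1)) (y : EuclideanSpace ℝ (Fin m)) :
    EuclideanSpace ℝ (Fin (m+1)) :=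
  WithLp.toLp 2 (i.insertNth (ε * Real.sqrt (a^2 - ‖y‖^2)) y.ofLp)

lemma chart_apply_same (m : ℕ) (a ε : ℝ) (i : Fin (m+1)) (y : EuclideanSpace ℝ (Fin m)) :
    chart m a ε i y i = ε * Real.sqrt (a^2 - ‖y‖^2) := by
  unfold chart; rw [WithLp.ofLp_toLp]; exact Fin.insertNth_apply_same (α := fun _ => ℝ) i _ _

lemma chart_apply_succAbove (m : ℕ) (a ε : ℝ) (i : Fin (m+1)) (y : EuclideanSpace ℝ (Fin m))
    (k : Fin m) : chart m a ε i y (i.succAbove k) = y k := by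
  unfold chart; rw [WithLp.ofLp_toLp]; exact Fin.insertNth_apply_succAbove (α := fun _ => ℝ) i _ _ _

lemma dist_sq_chart (m : ℕ) (a ε : ℝ) (i : Fin (m+1)) (y y' : EuclideanSpace ℝ (Fin m)) :
    dist (chart m a ε i y) (chart m a ε i y') ^ 2
      = (ε * Real.sqrt (a^2 - ‖y‖^2) - ε * Real.sqrt (a^2 - ‖y'‖^2))^2 + dist y y' ^ 2 := by
  have h1 : dist (chart m a ε i y) (chart m a ε i y') ^ 2
      = ∑ j, ((chart m a ε i y) j - (chart m a ε i y') j)^2 := by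
    rw [dist_eq_norm, normsq]; rfl
  have h2 : dist y y' ^ 2 = ∑ k, (y k - y' k)^2 := by
    rw [dist_eq_norm, normsq]; rfl
  rw [h1, h2, Fin.sum_univ_succAbove (fun j => ((chart m a ε i y) j - (chart m a ε i y') j)^2) i]
  simp only [chart_apply_same, chart_apply_succAbove]

lemma norm_chart (m : ℕ) (a ε : ℝ) (ha : 0 ≤ a) (hε : ε^2 = 1) (i : Fin (m+1))
    (y : EuclideanSpace ℝ (Fin m)) (hy : ‖y‖ ≤ a) : ‖chart m a ε i y‖ = a := by
  have hnn : 0 ≤ a^2 - ‖y‖^2 := by nlinarith [norm_nonneg y]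
  have h2 : ‖chart m a ε i y‖^2 = a^2 := by
    rw [normsq, Fin.sum_univ_succAbove (fun j => ((chart m a ε i y) j)^2) i]
    simp only [chart_apply_same, chart_apply_succAbove]
    have : ∑ k, (y k)^2 = ‖y‖^2 := (normsq m y).symm
    rw [this, mul_pow, hε, one_mul, Real.sq_sqrt hnn]
    ring
  calc ‖chart m a ε i y‖ = Real.sqrt (‖chart m a ε i y‖^2) :=
        (Real.sqrt_sq (norm_nonneg _)).symm
    _ = a := by rw [h2, Real.sqrt_sq ha]

lemma chart_mem_sphere (m : ℕ) (a ε : ℝ) (ha : 0 ≤ a) (hε : ε^2 = 1) (i : Fin (m+1))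
    (y : EuclideanSpace ℝ (Fin m)) (hy : ‖y‖ ≤ a) :
    chart m a ε i y ∈ sphere (0 : EuclideanSpace ℝ (Fin (m+1))) a := by
  rw [mem_sphere_iff_norm, sub_zero]; exact norm_chart m a ε ha hε i y hy

-- scalar sqrt estimate
lemma sqrt_diff_le {u v b : ℝ} (hb : 0 < b) (hu : b ≤ u) (hv : b ≤ v) :
    |Real.sqrt u - Real.sqrt v| ≤ |u - v| / (2 * Real.sqrt b) := by
  have hbu : Real.sqrt b ≤ Real.sqrt u := Real.sqrt_le_sqrt hu
  have hbv : Real.sqrt b ≤ Real.sqrt v := Real.sqrt_le_sqrt hv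
  have hb' : 0 < Real.sqrt b := Real.sqrt_pos.2 hb
  have key : (Real.sqrt u - Real.sqrt v) * (Real.sqrt u + Real.sqrt v) = u - v := by
    have := Real.sq_sqrt (hb.le.trans hu)
    have := Real.sq_sqrt (hb.le.trans hv)
    ring_nf
    nlinarith
  rw [le_div_iff₀ (by positivity : (0:ℝ) < 2 * Real.sqrt b), ← key, abs_mul,
    abs_of_nonneg (by positivity : (0:ℝ) ≤ Real.sqrt u + Real.sqrt v)]
  gcongr
  · linarith


-- Lipschitz bound for the chart on the ball of radius c < a
lemma chart_dist_le (m : ℕ) {a c ε : ℝ} (hc : 0 ≤ c) (hca : c < a) (hε : ε^2 = 1)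
    (i : Fin (m+1)) {y y' : EuclideanSpace ℝ (Fin m)}
    (hy : ‖y‖ ≤ c) (hy' : ‖y'‖ ≤ c) :
    dist (chart m a ε i y) (chart m a ε i y')
      ≤ Real.sqrt ((a / Real.sqrt (a^2 - c^2))^2 + 1) * dist y y' := by
  have ha : 0 < a := lt_of_le_of_lt hc hca
  have hb : 0 < a^2 - c^2 := by nlinarith
  set L0 : ℝ := a / Real.sqrt (a^2 - c^2) with hL0
  have hL0nn : 0 ≤ L0 := by positivity
  have hr : |‖y‖ - ‖y'‖| ≤ dist y y' := by
    rw [dist_eq_norm]; exact abs_norm_sub_norm_le _ _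
  have hkey : |Real.sqrt (a^2 - ‖y‖^2) - Real.sqrt (a^2 - ‖y'‖^2)| ≤ L0 * dist y y' := by
    have h1 : |(a^2 - ‖y‖^2) - (a^2 - ‖y'‖^2)| ≤ (2*a) * dist y y' := by
      have : (a^2 - ‖y‖^2) - (a^2 - ‖y'‖^2) = (‖y'‖ - ‖y‖) * (‖y'‖ + ‖y‖) := by ring
      rw [this, abs_mul]
      have h2 : |‖y'‖ + ‖y‖| ≤ 2*a := by
        rw [abs_of_nonneg (by positivity)]
        have := norm_nonneg y; have := norm_nonneg y'
        nlinarith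
      calc |‖y'‖ - ‖y‖| * |‖y'‖ + ‖y‖| ≤ dist y y' * (2*a) := by
            apply mul_le_mul _ h2 (abs_nonneg _) dist_nonneg
            rw [abs_sub_comm]; exact hr
        _ = (2*a) * dist y y' := by ring
    have h3 := sqrt_diff_le (u := a^2 - ‖y‖^2) (v := a^2 - ‖y'‖^2) hb
      (by nlinarith [norm_nonneg y]) (by nlinarith [norm_nonneg y'])
    refine h3.trans ?_
    rw [div_le_iff₀ (by positivity)]
    calc |(a^2 - ‖y‖^2) - (a^2 - ‖y'‖^2)| ≤ (2*a) * dist y y' := h1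
      _ = (a / Real.sqrt (a^2-c^2)) * dist y y' * (2 * Real.sqrt (a^2-c^2)) := by
          field_simp
  -- now square both sides
  have hd2 := dist_sq_chart m a ε i y y'
  have hsq : dist (chart m a ε i y) (chart m a ε i y') ^ 2
      ≤ (L0^2 + 1) * dist y y' ^ 2 := by
    rw [hd2]
    have : (ε * Real.sqrt (a^2 - ‖y‖^2) - ε * Real.sqrt (a^2 - ‖y'‖^2))^2
        = (Real.sqrt (a^2 - ‖y‖^2) - Real.sqrt (a^2 - ‖y'‖^2))^2 * ε^2 := by ring
    rw [this, hε, mul_one]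
    have h4 : (Real.sqrt (a^2 - ‖y‖^2) - Real.sqrt (a^2 - ‖y'‖^2))^2 ≤ (L0 * dist y y')^2 := by
      rw [← sq_abs]
      exact pow_le_pow_left₀ (abs_nonneg _) hkey 2
    nlinarith [(dist_nonneg : (0:ℝ) ≤ dist y y')]
  calc dist (chart m a ε i y) (chart m a ε i y')
      = Real.sqrt (dist (chart m a ε i y) (chart m a ε i y') ^ 2) :=
        (Real.sqrt_sq dist_nonneg).symm
    _ ≤ Real.sqrt ((L0^2+1) * dist y y' ^2) := Real.sqrt_le_sqrt hsq
    _ = Real.sqrt (L0^2+1) * dist y y' := by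
        rw [Real.sqrt_mul (by positivity), Real.sqrt_sq dist_nonneg]

lemma chart_lipschitzOn (m : ℕ) {a c ε : ℝ} (hc : 0 ≤ c) (hca : c < a) (hε : ε^2 = 1)
    (i : Fin (m+1)) :
    LipschitzOnWith (Real.sqrt ((a / Real.sqrt (a^2 - c^2))^2 + 1)).toNNReal
      (chart m a ε i) (closedBall 0 c) := by
  refine LipschitzOnWith.of_dist_le_mul fun y hy y' hy' => ?_
  rw [Real.coe_toNNReal _ (Real.sqrt_nonneg _)]
  exact chart_dist_le m hc hca hε i (by simpa using hy) (by simpa using hy')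

lemma sphere_chart_exists (m : ℕ) {a : ℝ} (ha : 0 < a)
    {x : EuclideanSpace ℝ (Fin (m+1))} (hx : x ∈ sphere (0:EuclideanSpace ℝ (Fin (m+1))) a) :
    ∃ (i : Fin (m+1)) (ε : ℝ) (y : EuclideanSpace ℝ (Fin m)), ε^2 = 1 ∧
      ‖y‖ ≤ Real.sqrt (a^2 - a^2/(m+1)) ∧ chart m a ε i y = x := by
  have hxn : ‖x‖ = a := by simpa using hx
  have hsum : ∑ j, (x j)^2 = a^2 := by rw [← normsq, hxn]
  obtain ⟨i, -, hi⟩ := Finset.exists_max_image Finset.univ (fun j => (x j)^2) ⟨0, Finset.mem_univ 0⟩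
  have hmax : ∀ j, (x j)^2 ≤ (x i)^2 := fun j => hi j (Finset.mem_univ j)
  have hcard : a^2 ≤ (m+1) * (x i)^2 := by
    calc a^2 = ∑ j, (x j)^2 := hsum.symm
      _ ≤ ∑ _j : Fin (m+1), (x i)^2 := Finset.sum_le_sum fun j _ => hmax j
      _ = (m+1) * (x i)^2 := by simp [mul_comm]
  have hxi : a^2/(m+1) ≤ (x i)^2 := by
    rw [div_le_iff₀ (by positivity)]; nlinarith
  set y : EuclideanSpace ℝ (Fin m) := WithLp.toLp 2 (i.removeNth x) with hy
  have hyn : ‖y‖^2 = a^2 - (x i)^2 := by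
    rw [normsq]
    have := Fin.sum_univ_succAbove (fun j => (x j)^2) i
    have hyk : ∀ k, (y k)^2 = (x (i.succAbove k))^2 := fun k => rfl
    simp only [hyk]
    linarith [hsum, Fin.sum_univ_succAbove (fun j => (x j)^2) i]
  have hynle : ‖y‖ ≤ Real.sqrt (a^2 - a^2/(m+1)) := by
    rw [← Real.sqrt_sq (norm_nonneg y)]
    apply Real.sqrt_le_sqrt
    rw [hyn]; linarith
  refine ⟨i, if 0 ≤ x i then 1 else -1, y, by split <;> norm_num, hynle, ?_⟩
  have hsqrt : Real.sqrt (a^2 - ‖y‖^2) = |x i| := by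
    rw [hyn]
    have : a^2 - (a^2 - (x i)^2) = (x i)^2 := by ring
    rw [this, Real.sqrt_sq_eq_abs]
  show WithLp.toLp 2 (i.insertNth ((if 0 ≤ x i then (1:ℝ) else -1) * Real.sqrt (a^2 - ‖y‖^2)) y.ofLp) = x
  rw [hsqrt]
  have : (if 0 ≤ x i then (1:ℝ) else -1) * |x i| = x i := by
    split
    · rw [one_mul, abs_of_nonneg ‹_›]
    · rw [neg_one_mul, abs_of_neg (lt_of_not_ge ‹_›), neg_neg]
  rw [this]
  exact congrArg (WithLp.toLp 2) (Fin.insertNth_self_removeNth i x.ofLp)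

noncomputable def proj (m : ℕ) (i : Fin (m+1)) (x : EuclideanSpace ℝ (Fin (m+1))) :
    EuclideanSpace ℝ (Fin m) := WithLp.toLp 2 (fun k => x (i.succAbove k))

lemma proj_lipschitz (m : ℕ) (i : Fin (m+1)) : LipschitzWith 1 (proj m i) := by
  refine LipschitzWith.of_dist_le_mul fun x x' => ?_
  rw [NNReal.coe_one, one_mul]
  have h1 : dist (proj m i x) (proj m i x')^2 ≤ dist x x'^2 := by
    have e1 : dist (proj m i x) (proj m i x')^2 = ∑ k, (x (i.succAbove k) - x' (i.succAbove k))^2 := by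
      rw [dist_eq_norm, normsq]; rfl
    have e2 : dist x x'^2 = (x i - x' i)^2 + ∑ k, (x (i.succAbove k) - x' (i.succAbove k))^2 := by
      rw [dist_eq_norm, normsq, Fin.sum_univ_succAbove (fun j => ((x - x') j)^2) i]; rfl
    rw [e1, e2]
    nlinarith [sq_nonneg (x i - x' i)]
  nlinarith [dist_nonneg (α := EuclideanSpace ℝ (Fin m)) (x := proj m i x) (y := proj m i x'),
    dist_nonneg (α := EuclideanSpace ℝ (Fin (m+1))) (x := x) (y := x')]

lemma proj_chart (m : ℕ) (a ε : ℝ) (i : Fin (m+1)) (y : EuclideanSpace ℝ (Fin m)) :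
    proj m i (chart m a ε i y) = y :=
  PiLp.ext fun k => chart_apply_succAbove m a ε i y k

lemma cval_lt (m : ℕ) {a : ℝ} (ha : 0 < a) :
    Real.sqrt (a^2 - a^2/(m+1)) < Real.sqrt (a^2 - a^2/(2*(m+1))) := by
  apply Real.sqrt_lt_sqrt
  · have h1 : (0:ℝ) < (m:ℝ)+1 := by positivity
    have : a^2/((m:ℝ)+1) ≤ a^2 := by
      rw [div_le_iff₀ h1]; nlinarith
    linarith
  · have h1 : (0:ℝ) < (m:ℝ)+1 := by positivity
    have : a^2/(2*((m:ℝ)+1)) < a^2/((m:ℝ)+1) := by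
      apply div_lt_div_of_pos_left (by positivity) (by positivity) (by linarith)
    linarith

lemma cval2_lt_a (m : ℕ) {a : ℝ} (ha : 0 < a) : Real.sqrt (a^2 - a^2/(2*(m+1))) < a := by
  rw [Real.sqrt_lt' ha]
  have : (0:ℝ) < a^2/(2*((m:ℝ)+1)) := by positivity
  linarith

lemma sphere_haus_lt_top (m : ℕ) {a : ℝ} (ha : 0 < a) :
    μH[(m:ℝ)] (sphere (0 : EuclideanSpace ℝ (Fin (m+1))) a) < ⊤ := by
  set c : ℝ := Real.sqrt (a^2 - a^2/(m+1)) with hcdef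
  have hc : 0 ≤ c := Real.sqrt_nonneg _
  have hca : c < a := lt_trans (cval_lt m ha) (cval2_lt_a m ha)
  have hcover : sphere (0 : EuclideanSpace ℝ (Fin (m+1))) a ⊆
      ⋃ i : Fin (m+1), (chart m a 1 i '' closedBall 0 c ∪ chart m a (-1) i '' closedBall 0 c) := by
    intro x hx
    obtain ⟨i, ε, y, hε, hy, hchart⟩ := sphere_chart_exists m ha hx
    refine Set.mem_iUnion.2 ⟨i, ?_⟩
    rcases mul_self_eq_one_iff.1 (by rw [← sq ε]; exact hε) with h1 | h1
    · exact Or.inl ⟨y, by simpa using hy, by rw [← h1]; exact hchart⟩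
    · exact Or.inr ⟨y, by simpa using hy, by rw [← h1]; exact hchart⟩
  refine lt_of_le_of_lt (measure_mono hcover) (lt_of_le_of_lt (measure_iUnion_le _) ?_)
  rw [tsum_fintype]
  refine ENNReal.sum_lt_top.2 fun i _ => ?_
  have himg : ∀ ε : ℝ, ε^2 = 1 → μH[(m:ℝ)] (chart m a ε i '' closedBall 0 c) < ⊤ := by
    intro ε hε
    refine lt_of_le_of_lt ((chart_lipschitzOn m hc hca hε i).hausdorffMeasure_image_le
      (Nat.cast_nonneg m)) (ENNReal.mul_lt_top ?_ (euc_haus_closedBall_lt_top m 0 c))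
    exact ENNReal.rpow_lt_top_of_nonneg (Nat.cast_nonneg m) ENNReal.coe_ne_top
  refine lt_of_le_of_lt (measure_union_le _ _) (ENNReal.add_lt_top.2 ⟨?_, ?_⟩)
  · exact himg 1 (by norm_num)
  · exact himg (-1) (by norm_num)

lemma sphere_cap_pos (m : ℕ) {a δ : ℝ} (ha : 0 < a) (hδ : 0 < δ)
    {σ₀ : EuclideanSpace ℝ (Fin (m+1))} (hσ₀ : σ₀ ∈ sphere (0:EuclideanSpace ℝ (Fin (m+1))) a) :
    0 < μH[(m:ℝ)] (sphere (0:EuclideanSpace ℝ (Fin (m+1))) a ∩ ball σ₀ δ) := by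
  obtain ⟨i, ε, y₀, hε, hy₀, hchart⟩ := sphere_chart_exists m ha hσ₀
  set c : ℝ := Real.sqrt (a^2 - a^2/(m+1)) with hcdef
  set c' : ℝ := Real.sqrt (a^2 - a^2/(2*(m+1))) with hc'def
  have hcc' : c < c' := cval_lt m ha
  have hc' : 0 ≤ c' := Real.sqrt_nonneg _
  have hc'a : c' < a := cval2_lt_a m ha
  set L : ℝ := Real.sqrt ((a / Real.sqrt (a^2 - c'^2))^2 + 1) with hLdef
  have hL : 0 ≤ L := Real.sqrt_nonneg _
  set ρ : ℝ := min (c' - c) (δ/(L+1)) with hρdef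
  have hρ : 0 < ρ := lt_min (by linarith) (by positivity)
  have himg : ∀ y : EuclideanSpace ℝ (Fin m), y ∈ ball y₀ ρ →
      chart m a ε i y ∈ sphere (0:EuclideanSpace ℝ (Fin (m+1))) a ∩ ball σ₀ δ := by
    intro y hy
    have hyd : dist y y₀ < ρ := mem_ball.1 hy
    have hyn : ‖y‖ ≤ c' := by
      have : ‖y‖ ≤ ‖y₀‖ + dist y y₀ := by
        rw [dist_eq_norm]
        calc ‖y‖ = ‖y₀ + (y - y₀)‖ := by rw [add_sub_cancel]
          _ ≤ ‖y₀‖ + ‖y - y₀‖ := norm_add_le _ _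
      have h2 : ρ ≤ c' - c := min_le_left _ _
      linarith
    constructor
    · exact chart_mem_sphere m a ε ha.le hε i y (hyn.trans hc'a.le)
    · rw [mem_ball, ← hchart]
      have hd := chart_dist_le m hc' hc'a hε i (y := y) (y' := y₀) hyn (hy₀.trans hcc'.le)
      have h3 : L * dist y y₀ ≤ L * ρ := by
        apply mul_le_mul_of_nonneg_left hyd.le hL
      have h4 : L * ρ < δ := by
        have h5 : ρ ≤ δ/(L+1) := min_le_right _ _
        have h6 : L * ρ ≤ L * (δ/(L+1)) := mul_le_mul_of_nonneg_left h5 hL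
        have h7 : L * (δ/(L+1)) < δ := by
          rw [mul_div_assoc']
          rw [div_lt_iff₀ (by linarith)]
          nlinarith
        linarith
      calc dist (chart m a ε i y) (chart m a ε i y₀) ≤ L * dist y y₀ := hd
        _ < δ := by linarith
  have hsub : ball y₀ ρ ⊆ proj m i '' (sphere (0:EuclideanSpace ℝ (Fin (m+1))) a ∩ ball σ₀ δ) := by
    intro y hy
    exact ⟨chart m a ε i y, himg y hy, proj_chart m a ε i y⟩
  have h1 : μH[(m:ℝ)] (ball y₀ ρ)
      ≤ μH[(m:ℝ)] (proj m i '' (sphere (0:EuclideanSpace ℝ (Fin (m+1))) a ∩ ball σ₀ δ)) :=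
    measure_mono hsub
  have h2 := (proj_lipschitz m i).hausdorffMeasure_image_le (Nat.cast_nonneg m)
    (sphere (0:EuclideanSpace ℝ (Fin (m+1))) a ∩ ball σ₀ δ)
  simp only [ENNReal.coe_one, ENNReal.one_rpow, one_mul] at h2
  exact lt_of_lt_of_le (euc_haus_ball_pos m y₀ hρ) (h1.trans h2)


lemma aeval_eq_eval' {n : ℕ} (p : MvPolynomial (Fin n) ℝ) (f : Fin n → ℝ) :
    MvPolynomial.aeval f p = MvPolynomial.eval f p := by
  rw [MvPolynomial.aeval_def, MvPolynomial.eval, Algebra.algebraMap_self]; rfl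

lemma paeval_eq_eval' (q : Polynomial ℝ) (t : ℝ) : Polynomial.aeval t q = q.eval t := by
  rw [Polynomial.aeval_def, Polynomial.eval₂_eq_eval_map, Algebra.algebraMap_self, Polynomial.map_id]

lemma eval_mul_eq {n : ℕ} (g : MvPolynomial (Fin n) ℝ) (v : Fin n → ℝ) (t : ℝ) :
    MvPolynomial.eval (fun i => t * v i) g
      = ∑ α ∈ g.support, MvPolynomial.coeff α g * t^(∑ i, α i) * ∏ i, v i ^ α i := by
  rw [MvPolynomial.eval_eq']
  refine Finset.sum_congr rfl fun α _ => ?_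
  simp only [mul_pow, Finset.prod_mul_distrib, Finset.prod_pow_eq_pow_sum]
  ring

lemma const_coeff_zero' {n : ℕ} (g : MvPolynomial (Fin n) ℝ)
    (hsupp : ∀ α ∈ g.support, 2 ≤ ∑ i, α i) :
    MvPolynomial.constantCoeff g = 0 := by
  have h0 : (0 : Fin n →₀ ℕ) ∉ g.support := fun h => by simpa using hsupp 0 h
  exact MvPolynomial.notMem_support_iff.1 h0

lemma const_coeff_zero {n : ℕ} (g : MvPolynomial (Fin n) ℝ)
    (hsupp : ∀ α ∈ g.support, 2 ≤ ∑ i, α i) :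
    MvPolynomial.eval (0 : Fin n → ℝ) g = 0 := by
  have h0 : (0 : Fin n →₀ ℕ) ∉ g.support := fun h => by simpa using hsupp 0 h
  rw [MvPolynomial.eval_zero]
  exact MvPolynomial.notMem_support_iff.1 h0

lemma poly_nonneg {n : ℕ} (g : MvPolynomial (Fin n) ℝ)
    (hsupp : ∀ α ∈ g.support, 2 ≤ ∑ i, α i)
    (hconv : ConvexOn ℝ Set.univ (fun v : Fin n → ℝ => MvPolynomial.eval v g)) :
    ∀ v : Fin n → ℝ, 0 ≤ MvPolynomial.eval v g := by
  intro v
  set h : ℝ → ℝ := fun t => ∑ α ∈ g.support,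
    MvPolynomial.coeff α g * t^((∑ i, α i) - 1) * ∏ i, v i ^ α i with hdef
  have hcont : Continuous h := by
    apply continuous_finset_sum
    exact fun α _ => (continuous_const.mul (continuous_pow _)).mul continuous_const
  have h0' : h 0 = 0 := by
    refine Finset.sum_eq_zero fun α hα => ?_
    have h2 := hsupp α hα
    rw [zero_pow (by omega)]
    ring
  have hth : ∀ t : ℝ, t * h t = MvPolynomial.eval (fun i => t * v i) g := by
    intro t
    rw [eval_mul_eq, hdef, Finset.mul_sum]
    refine Finset.sum_congr rfl fun α hα => ?_
    have h2 := hsupp α hα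
    have h3 : (∑ i, α i) = ((∑ i, α i) - 1) + 1 := by omega
    have h4 : t ^ (∑ i, α i) = t * t ^ ((∑ i, α i) - 1) := by
      nth_rewrite 1 [h3]
      rw [pow_succ]
      ring
    rw [h4]
    ring
  have key : ∀ t ∈ Set.Ioc (0:ℝ) 1, h t ≤ MvPolynomial.eval v g := by
    intro t ht
    have hc := hconv.2 (Set.mem_univ v) (Set.mem_univ (0 : Fin n → ℝ)) ht.1.le
      (by linarith [ht.2] : 0 ≤ 1 - t) (by ring)
    have hc2 : MvPolynomial.eval (t • v) g ≤ t * MvPolynomial.eval v g := by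
      simpa [const_coeff_zero' g hsupp] using hc
    have htv : (t • v) = fun i => t * v i := rfl
    rw [htv, ← hth t] at hc2
    exact le_of_mul_le_mul_left hc2 ht.1
  have ht0 : Filter.Tendsto h (nhdsWithin 0 (Set.Ioi (0:ℝ))) (nhds 0) := by
    have := (hcont.tendsto 0).mono_left (nhdsWithin_le_nhds (s := Set.Ioi (0:ℝ)))
    rwa [h0'] at this
  exact le_of_tendsto ht0 (Filter.eventually_of_mem
    (Ioc_mem_nhdsGT_of_mem ⟨le_refl 0, zero_lt_one⟩) key)

lemma poly_zero_of_sphere_zero {n : ℕ} {a : ℝ} (ha : 0 < a) (g : MvPolynomial (Fin n) ℝ)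
    (hsupp : ∀ α ∈ g.support, 2 ≤ ∑ i, α i)
    (hconv : ConvexOn ℝ Set.univ (fun v : Fin n → ℝ => MvPolynomial.eval v g))
    (hzero : ∀ x : EuclideanSpace ℝ (Fin n), ‖x‖ = a → MvPolynomial.eval (fun i => x i) g = 0) :
    g = 0 := by
  have hnn := poly_nonneg g hsupp hconv
  have hball : ∀ x : EuclideanSpace ℝ (Fin n), ‖x‖ ≤ a →
      MvPolynomial.eval (fun i => x i) g = 0 := by
    intro x hx
    rcases eq_or_ne x 0 with rfl | hx0
    · exact const_coeff_zero g hsupp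
    · have hxn : 0 < ‖x‖ := norm_pos_iff.2 hx0
      set w : EuclideanSpace ℝ (Fin n) := (a/‖x‖) • x with hw
      have hwn : ‖w‖ = a := by
        rw [hw, norm_smul, Real.norm_eq_abs, abs_of_pos (by positivity)]
        field_simp
      set t : ℝ := ‖x‖/a with htdef
      have ht : 0 < t := by positivity
      have ht1 : t ≤ 1 := by rw [htdef, div_le_one ha]; exact hx
      have hxw : (fun i => x i) = t • (fun i => w i) + (1 - t) • (0 : Fin n → ℝ) := by
        funext i
        simp only [Pi.add_apply, Pi.smul_apply, smul_eq_mul, Pi.zero_apply, mul_zero, add_zero]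
        rw [hw, htdef]
        show x i = ‖x‖/a * ((a/‖x‖) * x i)
        field_simp
      have hc := hconv.2 (Set.mem_univ (fun i => w i)) (Set.mem_univ (0 : Fin n → ℝ)) ht.le
        (by linarith : (0:ℝ) ≤ 1 - t) (by ring)
      beta_reduce at hc
      rw [← hxw] at hc
      have hc2 : MvPolynomial.eval (fun i => x i) g ≤ 0 := by
        simpa [hzero w hwn, const_coeff_zero' g hsupp] using hc
      exact le_antisymm hc2 (hnn _)
  refine MvPolynomial.funext fun v => ?_
  rw [map_zero]
  rcases eq_or_ne v 0 with rfl | hv0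
  · exact const_coeff_zero g hsupp
  set vE : EuclideanSpace ℝ (Fin n) := WithLp.toLp 2 v with hvE
  have hvEn : 0 < ‖vE‖ := norm_pos_iff.2 (fun h => hv0 (by simpa [hvE] using congrArg WithLp.ofLp h))
  set q : Polynomial ℝ := MvPolynomial.aeval (fun i => Polynomial.C (v i) * Polynomial.X) g
    with hqdef
  have hq : ∀ t : ℝ, q.eval t = MvPolynomial.eval (fun i => t * v i) g := by
    intro t
    have hcomp := MvPolynomial.comp_aeval (R := ℝ)
      (fun i => Polynomial.C (v i) * Polynomial.X) (Polynomial.aeval t)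
    have h1 := DFunLike.congr_fun hcomp g
    rw [AlgHom.comp_apply] at h1
    have hfe : (fun i => (Polynomial.aeval t) (Polynomial.C (v i) * Polynomial.X))
        = fun i => t * v i := by
      funext i
      rw [map_mul, Polynomial.aeval_C, Polynomial.aeval_X]
      simp [mul_comm]
    rw [hqdef, ← paeval_eq_eval', h1, hfe, ← aeval_eq_eval']
  have hroots : Set.Infinite {t : ℝ | q.IsRoot t} := by
    refine Set.Infinite.mono ?_ (Set.infinite_coe_iff.1 (Set.Ioo.infinite (by positivity : (0:ℝ) < a/‖vE‖)))
    intro t ht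
    show q.eval t = 0
    rw [hq t]
    have := hball (t • vE) ?_
    · convert this using 2
      simp [hvE]
    · rw [norm_smul, Real.norm_eq_abs, abs_of_pos ht.1]
      calc t * ‖vE‖ ≤ (a/‖vE‖) * ‖vE‖ := by
            apply mul_le_mul_of_nonneg_right ht.2.le (norm_nonneg _)
        _ = a := by field_simp
  have hq0 : q = 0 := Polynomial.eq_zero_of_infinite_isRoot q hroots
  have h1 := hq 1
  rw [hq0] at h1
  simp only [Polynomial.eval_zero] at h1
  have h1v : (fun i => (1:ℝ) * v i) = v := by funext i; rw [one_mul]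
  rw [h1v] at h1
  exact h1.symm


lemma integrableOn_sphere (m : ℕ) {a : ℝ} (ha : 0 < a) (f : EuclideanSpace ℝ (Fin (m+1)) → ℝ)
    (hf : Continuous f) :
    IntegrableOn f (sphere (0 : EuclideanSpace ℝ (Fin (m+1))) a) μH[(m:ℝ)] := by
  set S := sphere (0 : EuclideanSpace ℝ (Fin (m+1))) a with hS
  have hSm : MeasurableSet S := Metric.isClosed_sphere.measurableSet
  haveI : IsFiniteMeasure (μH[(m:ℝ)].restrict S) := by
    constructor
    rw [Measure.restrict_apply_univ]
    exact sphere_haus_lt_top m ha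
  obtain ⟨C, hC⟩ := (isCompact_sphere (0 : EuclideanSpace ℝ (Fin (m+1))) a).exists_bound_of_continuousOn
    hf.continuousOn
  refine Integrable.mono' (integrable_const C) hf.aestronglyMeasurable ?_
  rw [ae_restrict_iff' hSm]
  exact Filter.Eventually.of_forall hC

lemma sphere_integral_pos (m : ℕ) {a : ℝ} (ha : 0 < a) (f : EuclideanSpace ℝ (Fin (m+1)) → ℝ)
    (hf : Continuous f) (hnn : ∀ x ∈ sphere (0 : EuclideanSpace ℝ (Fin (m+1))) a, 0 ≤ f x)
    {σ₀ : EuclideanSpace ℝ (Fin (m+1))} (hσ₀ : σ₀ ∈ sphere (0:EuclideanSpace ℝ (Fin (m+1))) a)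
    (hfσ₀ : 0 < f σ₀) :
    0 < ∫ x in sphere (0 : EuclideanSpace ℝ (Fin (m+1))) a, f x ∂μH[(m:ℝ)] := by
  set S := sphere (0 : EuclideanSpace ℝ (Fin (m+1))) a with hS
  have hSm : MeasurableSet S := Metric.isClosed_sphere.measurableSet
  -- find δ such that f > f σ₀ / 2 on ball σ₀ δ
  obtain ⟨δ, hδ, hball⟩ : ∃ δ > 0, ∀ x ∈ ball σ₀ δ, f σ₀ / 2 < f x := by
    have hopen : IsOpen (f ⁻¹' Set.Ioi (f σ₀ / 2)) := (isOpen_Ioi).preimage hf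
    obtain ⟨δ, hδ, hsub⟩ := Metric.isOpen_iff.1 hopen σ₀ (by simp only [Set.mem_preimage, Set.mem_Ioi]; linarith)
    exact ⟨δ, hδ, fun x hx => hsub hx⟩
  have hint : IntegrableOn f S μH[(m:ℝ)] := integrableOn_sphere m ha f hf
  have h1 : ∫ x in S ∩ ball σ₀ δ, f x ∂μH[(m:ℝ)] ≤ ∫ x in S, f x ∂μH[(m:ℝ)] := by
    refine setIntegral_mono_set hint ?_ (HasSubset.Subset.eventuallyLE inter_subset_left)
    rw [Filter.EventuallyLE, ae_restrict_iff' hSm]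
    exact Filter.Eventually.of_forall fun x hx => hnn x hx
  have hμ : μH[(m:ℝ)] (S ∩ ball σ₀ δ) ≠ ⊤ :=
    (lt_of_le_of_lt (measure_mono inter_subset_left) (sphere_haus_lt_top m ha)).ne
  have hμpos : 0 < μH[(m:ℝ)] (S ∩ ball σ₀ δ) := sphere_cap_pos m ha hδ hσ₀
  have h2 : (f σ₀ / 2) * (μH[(m:ℝ)] (S ∩ ball σ₀ δ)).toReal
      ≤ ∫ x in S ∩ ball σ₀ δ, f x ∂μH[(m:ℝ)] := by
    refine setIntegral_ge_of_const_le_real (hSm.inter measurableSet_ball) hμ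
      (fun x hx => (hball x hx.2).le) (hint.mono_set inter_subset_left)
  have h3 : 0 < (f σ₀ / 2) * (μH[(m:ℝ)] (S ∩ ball σ₀ δ)).toReal := by
    apply mul_pos (by linarith)
    exact ENNReal.toReal_pos hμpos.ne' hμ
  linarith


section assembly

variable (m M : ℕ)

local notation "ι" => {α : Fin (m+1) →₀ ℕ // 2 ≤ ∑ i, α i ∧ ∑ i, α i ≤ M}

noncomputable instance fintype_ind : Fintype ι := by
  have h1 : {f : Fin (m+1) → ℕ | ∀ i, f i ≤ M}.Finite := by
    refine (Set.Finite.pi (fun i : Fin (m+1) => Set.finite_Iic M)).subset ?_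
    intro f hf
    simp only [Set.mem_pi, Set.mem_univ, Set.mem_Iic, forall_true_left]
    exact hf
  have h3 : ((fun (α : Fin (m+1) →₀ ℕ) (i : Fin (m+1)) => α i) ⁻¹'
      {f : Fin (m+1) → ℕ | ∀ i, f i ≤ M}).Finite := by
    refine h1.preimage fun x _ y _ h => ?_
    ext i
    exact congrFun h i
  have h2 : {α : Fin (m+1) →₀ ℕ | 2 ≤ ∑ i, α i ∧ ∑ i, α i ≤ M}.Finite := by
    refine h3.subset ?_
    intro α hα i
    calc α i ≤ ∑ j, α j := Finset.single_le_sum (fun j _ => Nat.zero_le _) (Finset.mem_univ i)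
      _ ≤ M := hα.2
  exact h2.fintype

noncomputable def Phi (c : ι → ℝ) : MvPolynomial (Fin (m+1)) ℝ :=
  ∑ α : ι, MvPolynomial.monomial α.1 (c α)

lemma eval_Phi (c : ι → ℝ) (v : Fin (m+1) → ℝ) :
    MvPolynomial.eval v (Phi m M c) = ∑ α : ι, c α * ∏ i, v i ^ (α.1 i) := by
  rw [Phi, map_sum]
  exact Finset.sum_congr rfl fun α _ => by rw [MvPolynomial.eval_monomial, Finsupp.prod_pow]

lemma coeff_Phi (c : ι → ℝ) (β : Fin (m+1) →₀ ℕ) :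
    MvPolynomial.coeff β (Phi m M c)
      = if h : (2 ≤ ∑ i, β i ∧ ∑ i, β i ≤ M) then c ⟨β, h⟩ else 0 := by
  rw [Phi, MvPolynomial.coeff_sum]
  simp only [MvPolynomial.coeff_monomial]
  split
  · next h =>
    rw [Finset.sum_eq_single (⟨β, h⟩ : ι)]
    · simp
    · intro α _ hne
      have : ¬ α.1 = β := fun he => hne (Subtype.ext he)
      simp [this]
    · intro habs
      exact absurd (Finset.mem_univ _) habs
  · next h =>
    refine Finset.sum_eq_zero fun α _ => ?_
    have : ¬ α.1 = β := fun he => h (he ▸ α.2)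
    simp [this]

lemma Phi_coeffs (g : MvPolynomial (Fin (m+1)) ℝ)
    (hg : ∀ α ∈ g.support, 2 ≤ ∑ i, α i ∧ ∑ i, α i ≤ M) :
    Phi m M (fun α => MvPolynomial.coeff α.1 g) = g := by
  apply MvPolynomial.ext
  intro β
  rw [coeff_Phi]
  split
  · rfl
  · next h =>
    by_contra hne
    exact h (hg β (MvPolynomial.mem_support_iff.2 fun he => hne he.symm))

lemma Phi_smul (s : ℝ) (c : ι → ℝ) : Phi m M (s • c) = s • Phi m M c := by
  rw [Phi, Phi, Finset.smul_sum]
  exact Finset.sum_congr rfl fun α _ => by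
    simp [MvPolynomial.smul_monomial, smul_eq_mul]

lemma eval_smul_poly (s : ℝ) (p : MvPolynomial (Fin (m+1)) ℝ) (v : Fin (m+1) → ℝ) :
    MvPolynomial.eval v (s • p) = s * MvPolynomial.eval v p := by
  rw [MvPolynomial.smul_eq_C_mul, map_mul, MvPolynomial.eval_C]

lemma sum_abs_coeffs (g : MvPolynomial (Fin (m+1)) ℝ)
    (hg : ∀ α ∈ g.support, 2 ≤ ∑ i, α i ∧ ∑ i, α i ≤ M) :
    ∑ α ∈ g.support, |MvPolynomial.coeff α g| = ∑ α : ι, |MvPolynomial.coeff α.1 g| := by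
  have himg : ∑ β ∈ (Finset.univ : Finset ι).image Subtype.val, |MvPolynomial.coeff β g|
      = ∑ α : ι, |MvPolynomial.coeff α.1 g| :=
    Finset.sum_image (fun x _ y _ h => Subtype.ext h)
  rw [← himg]
  refine Finset.sum_subset ?_ ?_
  · intro β hβ
    exact Finset.mem_image.2 ⟨⟨β, hg β hβ⟩, Finset.mem_univ _, rfl⟩
  · intro β _ hβ
    rw [MvPolynomial.notMem_support_iff.1 hβ, abs_zero]

end assembly

open MvPolynomial in
theorem stmt4 (n M : ℕ) (hn : 1 ≤ n) (hM : 2 ≤ M) (a : ℝ) (ha : 0 < a) :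
    ∃ C : ℝ, 0 < C ∧
      ∀ g : MvPolynomial (Fin n) ℝ,
        (∀ α ∈ g.support, 2 ≤ ∑ i, α i ∧ ∑ i, α i ≤ M) →
        ConvexOn ℝ Set.univ (fun v : Fin n → ℝ => MvPolynomial.eval v g) →
        ∑ α ∈ g.support, |MvPolynomial.coeff α g|
          ≤ C * ∫ σ in Metric.sphere (0 : EuclideanSpace ℝ (Fin n)) a,
                MvPolynomial.eval (fun i => σ i) g ∂(μH[(n : ℝ) - 1]) := by
  obtain ⟨m, rfl⟩ : ∃ m, n = m + 1 := ⟨n - 1, by omega⟩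
  have hcast : ((m+1 : ℕ):ℝ) - 1 = (m:ℝ) := by push_cast; ring
  rw [hcast]
  -- coordinate continuity on EuclideanSpace
  have hcoord : ∀ i : Fin (m+1), Continuous fun x : EuclideanSpace ℝ (Fin (m+1)) => x i :=
    fun i => (continuous_apply i).comp (PiLp.continuous_ofLp 2 (fun _ : Fin (m+1) => ℝ))
  have hcontE : ∀ p : MvPolynomial (Fin (m+1)) ℝ,
      Continuous (fun x : EuclideanSpace ℝ (Fin (m+1)) => MvPolynomial.eval (fun i => x i) p) :=
    fun p => (MvPolynomial.continuous_eval p).comp (continuous_pi hcoord)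
  set Ifun : ({α : Fin (m+1) →₀ ℕ // 2 ≤ ∑ i, α i ∧ ∑ i, α i ≤ M} → ℝ) → ℝ :=
    fun c => ∫ x in Metric.sphere (0 : EuclideanSpace ℝ (Fin (m+1))) a,
      MvPolynomial.eval (fun i => x i) (Phi m M c) ∂μH[(m:ℝ)] with hIfun
  have hIeq : ∀ c, Ifun c = ∑ α : {α : Fin (m+1) →₀ ℕ // 2 ≤ ∑ i, α i ∧ ∑ i, α i ≤ M},
      c α * ∫ x in Metric.sphere (0 : EuclideanSpace ℝ (Fin (m+1))) a,
        (∏ i, (x i) ^ (α.1 i)) ∂μH[(m:ℝ)] := by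
    intro c
    rw [hIfun]
    simp only
    have hstep : (fun x : EuclideanSpace ℝ (Fin (m+1)) =>
        MvPolynomial.eval (fun i => x i) (Phi m M c))
        = fun x => ∑ α : {α : Fin (m+1) →₀ ℕ // 2 ≤ ∑ i, α i ∧ ∑ i, α i ≤ M},
            c α * ∏ i, (x i) ^ (α.1 i) := funext fun x => eval_Phi m M c _
    rw [hstep, integral_finset_sum]
    · exact Finset.sum_congr rfl fun α _ => integral_const_mul _ _
    · intro α _
      exact (integrableOn_sphere m ha _
        (continuous_finset_prod _ fun i _ => (hcoord i).pow _)).const_mul _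
  have hevc : ∀ v : Fin (m+1) → ℝ,
      Continuous fun c : {α : Fin (m+1) →₀ ℕ // 2 ≤ ∑ i, α i ∧ ∑ i, α i ≤ M} → ℝ =>
        MvPolynomial.eval v (Phi m M c) := by
    intro v
    have : (fun c : {α : Fin (m+1) →₀ ℕ // 2 ≤ ∑ i, α i ∧ ∑ i, α i ≤ M} → ℝ =>
        MvPolynomial.eval v (Phi m M c))
        = fun c => ∑ α : {α : Fin (m+1) →₀ ℕ // 2 ≤ ∑ i, α i ∧ ∑ i, α i ≤ M},
            c α * ∏ i, v i ^ (α.1 i) := funext fun c => eval_Phi m M c v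
    rw [this]
    exact continuous_finset_sum _ fun α _ => (continuous_apply α).mul continuous_const
  have hIcont : Continuous Ifun := by
    have : Ifun = fun c => ∑ α : {α : Fin (m+1) →₀ ℕ // 2 ≤ ∑ i, α i ∧ ∑ i, α i ≤ M},
        c α * ∫ x in Metric.sphere (0 : EuclideanSpace ℝ (Fin (m+1))) a,
          (∏ i, (x i) ^ (α.1 i)) ∂μH[(m:ℝ)] := funext hIeq
    rw [this]
    exact continuous_finset_sum _ fun α _ => (continuous_apply α).mul continuous_const
  set K : Set ({α : Fin (m+1) →₀ ℕ // 2 ≤ ∑ i, α i ∧ ∑ i, α i ≤ M} → ℝ) :=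
    {c | ConvexOn ℝ Set.univ (fun v => MvPolynomial.eval v (Phi m M c)) ∧ ∑ α, |c α| = 1}
    with hK
  have hN1cont : Continuous fun c : {α : Fin (m+1) →₀ ℕ // 2 ≤ ∑ i, α i ∧ ∑ i, α i ≤ M} → ℝ =>
      ∑ α, |c α| := continuous_finset_sum _ fun α _ => (continuous_apply α).abs
  have hKclosed : IsClosed K := by
    have hc1 : IsClosed {c : {α : Fin (m+1) →₀ ℕ // 2 ≤ ∑ i, α i ∧ ∑ i, α i ≤ M} → ℝ |
        ConvexOn ℝ Set.univ (fun v => MvPolynomial.eval v (Phi m M c))} := by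
      have heq : {c : {α : Fin (m+1) →₀ ℕ // 2 ≤ ∑ i, α i ∧ ∑ i, α i ≤ M} → ℝ |
        ConvexOn ℝ Set.univ (fun v => MvPolynomial.eval v (Phi m M c))}
        = ⋂ (x : Fin (m+1) → ℝ) (y : Fin (m+1) → ℝ) (p : ℝ) (q : ℝ) (_ : 0 ≤ p) (_ : 0 ≤ q)
            (_ : p + q = 1),
          {c | MvPolynomial.eval (p • x + q • y) (Phi m M c)
            ≤ p * MvPolynomial.eval x (Phi m M c) + q * MvPolynomial.eval y (Phi m M c)} := by
        ext c
        simp only [Set.mem_setOf_eq, Set.mem_iInter]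
        constructor
        · intro hc x y p q hp hq hpq
          have := hc.2 (Set.mem_univ x) (Set.mem_univ y) hp hq hpq
          simpa using this
        · intro hc
          refine ⟨convex_univ, fun x _ y _ p q hp hq hpq => ?_⟩
          simpa using hc x y p q hp hq hpq
      rw [heq]
      refine isClosed_iInter fun x => isClosed_iInter fun y => isClosed_iInter fun p =>
        isClosed_iInter fun q => isClosed_iInter fun _ => isClosed_iInter fun _ =>
        isClosed_iInter fun _ => ?_
      exact isClosed_le (hevc _)
        ((continuous_const.mul (hevc x)).add (continuous_const.mul (hevc y)))
    have hc2 : IsClosed {c : {α : Fin (m+1) →₀ ℕ // 2 ≤ ∑ i, α i ∧ ∑ i, α i ≤ M} → ℝ |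
        ∑ α, |c α| = 1} := isClosed_eq hN1cont continuous_const
    have hKeq : K = {c | ConvexOn ℝ Set.univ (fun v => MvPolynomial.eval v (Phi m M c))}
        ∩ {c | ∑ α, |c α| = 1} := rfl
    rw [hKeq]
    exact hc1.inter hc2
  have hKcpt : IsCompact K := by
    refine (isCompact_closedBall (0 : {α : Fin (m+1) →₀ ℕ // 2 ≤ ∑ i, α i ∧ ∑ i, α i ≤ M} → ℝ) 1).of_isClosed_subset
      hKclosed ?_
    intro c hc
    rw [Metric.mem_closedBall, dist_zero_right]
    refine (pi_norm_le_iff_of_nonneg zero_le_one).2 fun α => ?_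
    rw [Real.norm_eq_abs, ← hc.2]
    exact Finset.single_le_sum (fun β _ => abs_nonneg (c β)) (Finset.mem_univ α)
  -- membership in K violates nothing: positivity of the integral on K
  have hKpos : ∀ c ∈ K, 0 < Ifun c := by
    intro c hc
    have hsupp : ∀ α ∈ (Phi m M c).support, 2 ≤ ∑ i, α i ∧ ∑ i, α i ≤ M := by
      intro α hα
      by_contra h
      have h2 := coeff_Phi m M c α
      rw [dif_neg h] at h2
      exact (MvPolynomial.mem_support_iff.1 hα) h2
    have hsupp2 : ∀ α ∈ (Phi m M c).support, 2 ≤ ∑ i, α i := fun α h => (hsupp α h).1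
    have hnn := poly_nonneg (Phi m M c) hsupp2 hc.1
    have hg0ne : Phi m M c ≠ 0 := by
      intro h0
      have hz : ∀ α : {α : Fin (m+1) →₀ ℕ // 2 ≤ ∑ i, α i ∧ ∑ i, α i ≤ M}, c α = 0 := by
        intro α
        have hcoef := coeff_Phi m M c α.1
        rw [dif_pos α.2, h0] at hcoef
        simpa using hcoef.symm
      have : (1:ℝ) = 0 := by
        rw [← hc.2]
        exact Finset.sum_eq_zero fun α _ => by rw [hz α, abs_zero]
      norm_num at this
    have hex : ∃ σ₀ ∈ Metric.sphere (0 : EuclideanSpace ℝ (Fin (m+1))) a,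
        0 < MvPolynomial.eval (fun i => σ₀ i) (Phi m M c) := by
      by_contra hno
      push_neg at hno
      refine hg0ne (poly_zero_of_sphere_zero ha (Phi m M c) hsupp2 hc.1 fun x hx => ?_)
      have hxS : x ∈ Metric.sphere (0 : EuclideanSpace ℝ (Fin (m+1))) a := by
        rw [mem_sphere_iff_norm, sub_zero]; exact hx
      exact le_antisymm (hno x hxS) (hnn _)
    obtain ⟨σ₀, hσ₀S, hσ₀⟩ := hex
    exact sphere_integral_pos m ha _ (hcontE _) (fun x _ => hnn _) hσ₀S hσ₀
  have hIsmul : ∀ (s : ℝ) c, Ifun (s • c) = s * Ifun c := by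
    intro s c
    rw [hIfun]
    simp only
    have : (fun x : EuclideanSpace ℝ (Fin (m+1)) =>
        MvPolynomial.eval (fun i => x i) (Phi m M (s • c)))
        = fun x => s * MvPolynomial.eval (fun i => x i) (Phi m M c) := by
      funext x
      rw [Phi_smul, eval_smul_poly]
    rw [this, integral_const_mul]
  -- scaling construction
  have hscale : ∀ g : MvPolynomial (Fin (m+1)) ℝ,
      (∀ α ∈ g.support, 2 ≤ ∑ i, α i ∧ ∑ i, α i ≤ M) →
      ConvexOn ℝ Set.univ (fun v : Fin (m+1) → ℝ => MvPolynomial.eval v g) → g ≠ 0 →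
      ∃ N : ℝ, 0 < N ∧ (∑ α ∈ g.support, |MvPolynomial.coeff α g| = N) ∧
        Phi m M (fun α => MvPolynomial.coeff α.1 g) = g ∧
        (N⁻¹ • fun α => MvPolynomial.coeff α.1 g) ∈ K := by
    intro g hg hconv hg0
    have hΦc := Phi_coeffs m M g hg
    set N : ℝ := ∑ α : {α : Fin (m+1) →₀ ℕ // 2 ≤ ∑ i, α i ∧ ∑ i, α i ≤ M},
      |MvPolynomial.coeff α.1 g| with hNdef
    have hNnn : 0 ≤ N := Finset.sum_nonneg fun α _ => abs_nonneg _
    have hNpos : 0 < N := by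
      rcases hNnn.lt_or_eq with h | h
      · exact h
      · exfalso
        apply hg0
        rw [← hΦc]
        have hz : ∀ α : {α : Fin (m+1) →₀ ℕ // 2 ≤ ∑ i, α i ∧ ∑ i, α i ≤ M},
            MvPolynomial.coeff α.1 g = 0 := by
          intro α
          have := (Finset.sum_eq_zero_iff_of_nonneg fun β _ => abs_nonneg _).1 h.symm α
            (Finset.mem_univ α)
          exact abs_eq_zero.1 this
        rw [Phi]
        exact Finset.sum_eq_zero fun α _ => by rw [hz α, map_zero]
    refine ⟨N, hNpos, (sum_abs_coeffs m M g hg).trans hNdef.symm, hΦc, ?_⟩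
    constructor
    · have heq2 : (fun v => MvPolynomial.eval v
          (Phi m M (N⁻¹ • fun α => MvPolynomial.coeff α.1 g)))
          = fun v : Fin (m+1) → ℝ => N⁻¹ * MvPolynomial.eval v g := by
        funext v
        rw [Phi_smul, eval_smul_poly, hΦc]
      rw [heq2]
      have h2 := hconv.smul (c := N⁻¹) (by positivity)
      simpa [smul_eq_mul] using h2
    · show (∑ α : {α : Fin (m+1) →₀ ℕ // 2 ≤ ∑ i, α i ∧ ∑ i, α i ≤ M},
        |(N⁻¹ • fun α => MvPolynomial.coeff α.1 g) α|) = 1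
      have : ∀ α : {α : Fin (m+1) →₀ ℕ // 2 ≤ ∑ i, α i ∧ ∑ i, α i ≤ M},
          |(N⁻¹ • fun α => MvPolynomial.coeff α.1 g) α| = N⁻¹ * |MvPolynomial.coeff α.1 g| := by
        intro α
        rw [Pi.smul_apply, smul_eq_mul, abs_mul, abs_of_nonneg (by positivity : (0:ℝ) ≤ N⁻¹)]
      rw [Finset.sum_congr rfl fun α _ => this α, ← Finset.mul_sum, ← hNdef,
        inv_mul_cancel₀ hNpos.ne']
  by_cases hKne : K.Nonempty
  · obtain ⟨c₀, hc₀K, hmin⟩ := hKcpt.exists_isMinOn hKne hIcont.continuousOn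
    have hm0 : 0 < Ifun c₀ := hKpos c₀ hc₀K
    refine ⟨(Ifun c₀)⁻¹, inv_pos.2 hm0, ?_⟩
    intro g hg hconv
    by_cases hg0 : g = 0
    · subst hg0
      simp
    · obtain ⟨N, hNpos, hNsum, hΦc, hcK⟩ := hscale g hg hconv hg0
      have hge : Ifun c₀ ≤ Ifun (N⁻¹ • fun α => MvPolynomial.coeff α.1 g) :=
        (isMinOn_iff.1 hmin) _ hcK
      rw [hIsmul] at hge
      have hIg : Ifun (fun α => MvPolynomial.coeff α.1 g)
          = ∫ σ in Metric.sphere (0 : EuclideanSpace ℝ (Fin (m+1))) a,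
              MvPolynomial.eval (fun i => σ i) g ∂μH[(m:ℝ)] := by
        rw [hIfun]
        simp only [hΦc]
      rw [hIg] at hge
      rw [hNsum]
      set I : ℝ := ∫ σ in Metric.sphere (0 : EuclideanSpace ℝ (Fin (m+1))) a,
        MvPolynomial.eval (fun i => σ i) g ∂μH[(m:ℝ)]
      have h5 : N * Ifun c₀ ≤ I := by
        have := mul_le_mul_of_nonneg_left hge hNpos.le
        rwa [← mul_assoc, mul_inv_cancel₀ hNpos.ne', one_mul] at this
      calc N = (Ifun c₀)⁻¹ * (N * Ifun c₀) := by field_simp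
        _ ≤ (Ifun c₀)⁻¹ * I := mul_le_mul_of_nonneg_left h5 (by positivity)
  · refine ⟨1, one_pos, ?_⟩
    intro g hg hconv
    by_cases hg0 : g = 0
    · subst hg0
      simp
    · obtain ⟨N, hNpos, hNsum, hΦc, hcK⟩ := hscale g hg hconv hg0
      exact absurd ⟨_, hcK⟩ hKne
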